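/- Let G = Γ((Z/2Z)^n, S) be a Cayley graph where S is a Sidon set. Then G admits an orthogonal signing (a symmetric ±1-signing of its adjacency matrix with pairwise orthogonal rows) if and only if there exists a labelling f: E(G) → Z/2Z such that every 4-cycle of G has an odd number of edges labelled 1. -/

import Mathlib

open scoped Classical

def cayley (n : ℕ) (S : Set (Fin n → ZMod 2)) : SimpleGraph (Fin n → ZMod 2) where
  Adj x y := x ≠ y ∧ x + y ∈ S
  symm := by
    constructor
    intro x y h
    exact ⟨h.1.symm, by rw [add_comm]; exact h.2⟩
  loopless := by
    constructor
    intro x h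
    exact h.1 rfl

/-- An orthogonal signing of a graph `G` on a finite vertex set: a symmetric matrix with
entries `±1` on edges and `0` elsewhere, whose distinct rows are orthogonal. -/
def IsOrthSigning {V : Type*} [Fintype V] (G : SimpleGraph V) (M : Matrix V V ℝ) : Prop :=
  M.IsSymm ∧ (∀ u v, G.Adj u v → M u v = 1 ∨ M u v = -1) ∧
    (∀ u v, ¬ G.Adj u v → M u v = 0) ∧
    (∀ u v, u ≠ v → ∑ w, M u w * M v w = 0)

section helpers

lemma shift' {V : Type*} [AddCommGroup V] (hx : ∀ x : V, x + x = 0)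
    {a b c : V} (h : a + b = c) : b = a + c := by
  rw [← h, ← add_assoc, hx a, zero_add]

lemma xx (n : ℕ) : ∀ x : Fin n → ZMod 2, x + x = 0 := by
  intro x
  funext i
  have : ∀ a : ZMod 2, a + a = 0 := by decide
  exact this (x i)

noncomputable def chi (x : ZMod 2) : ℝ := if x = 0 then 1 else -1

lemma chi_add (a b : ZMod 2) : chi (a + b) = chi a * chi b := by
  rcases (show ∀ t : ZMod 2, t = 0 ∨ t = 1 by decide) a with rfl | rfl <;> rcases (show ∀ t : ZMod 2, t = 0 ∨ t = 1 by decide) b with rfl | rfl <;> simp [chi, show (1+1:ZMod 2)=0 from by decide, show (1:ZMod 2) ≠ 0 from by decide]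

lemma chi_one_or (a : ZMod 2) : chi a = 1 ∨ chi a = -1 := by
  rcases (show ∀ t : ZMod 2, t = 0 ∨ t = 1 by decide) a with rfl | rfl <;> norm_num [chi, show (1:ZMod 2) ≠ 0 from by decide]

lemma chi_sum_eq_zero {x y : ZMod 2} (h : x + y = 1) : chi x + chi y = 0 := by
  rcases (show ∀ t : ZMod 2, t = 0 ∨ t = 1 by decide) x with rfl | rfl <;> rcases (show ∀ t : ZMod 2, t = 0 ∨ t = 1 by decide) y with rfl | rfl <;> simp_all [chi, show (1+1:ZMod 2)=0 from by decide, show (1:ZMod 2) ≠ 0 from by decide] <;> norm_num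

lemma chi_sum_zero_iff {x y : ZMod 2} (h : chi x + chi y = 0) : x + y = 1 := by
  rcases (show ∀ t : ZMod 2, t = 0 ∨ t = 1 by decide) x with rfl | rfl <;> rcases (show ∀ t : ZMod 2, t = 0 ∨ t = 1 by decide) y with rfl | rfl <;> simp_all [chi, show (1+1:ZMod 2)=0 from by decide, show (1:ZMod 2) ≠ 0 from by decide] <;> norm_num at h

lemma sidon_common (n : ℕ) (S : Set (Fin n → ZMod 2))
    (hSidon : ∀ s₁ ∈ S, ∀ s₂ ∈ S, ∀ s₃ ∈ S, ∀ s₄ ∈ S,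
      s₁ ≠ s₂ → s₃ ≠ s₄ → s₁ + s₂ = s₃ + s₄ →
      ({s₁, s₂} : Set (Fin n → ZMod 2)) = {s₃, s₄})
    {u v w w₁ : Fin n → ZMod 2} (huv : u ≠ v)
    (h1 : (cayley n S).Adj u w) (h2 : (cayley n S).Adj v w)
    (h3 : (cayley n S).Adj u w₁) (h4 : (cayley n S).Adj v w₁) :
    w = w₁ ∨ w = u + (v + w₁) := by
  have hx := xx n
  have hne12 : u + w ≠ v + w := fun h => huv (add_right_cancel h)
  have hne34 : u + w₁ ≠ v + w₁ := fun h => huv (add_right_cancel h)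
  have hsum : (u + w) + (v + w) = (u + w₁) + (v + w₁) := by
    rw [add_add_add_comm, hx, add_zero, add_add_add_comm, hx, add_zero]
  have hset := hSidon _ h1.2 _ h2.2 _ h3.2 _ h4.2 hne12 hne34 hsum
  have hmem : u + w ∈ ({u + w₁, v + w₁} : Set (Fin n → ZMod 2)) := by
    rw [← hset]; exact Set.mem_insert _ _
  rcases hmem with h | h
  · left; exact add_left_cancel h
  · right
    exact shift' hx h

end helpers

theorem stmt11 (n : ℕ) (S : Set (Fin n → ZMod 2)) (h0 : (0 : Fin n → ZMod 2) ∉ S)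
    (hSidon : ∀ s₁ ∈ S, ∀ s₂ ∈ S, ∀ s₃ ∈ S, ∀ s₄ ∈ S,
      s₁ ≠ s₂ → s₃ ≠ s₄ → s₁ + s₂ = s₃ + s₄ →
      ({s₁, s₂} : Set (Fin n → ZMod 2)) = {s₃, s₄}) :
    (∃ M : Matrix (Fin n → ZMod 2) (Fin n → ZMod 2) ℝ, IsOrthSigning (cayley n S) M) ↔
    (∃ f : Sym2 (Fin n → ZMod 2) → ZMod 2,
      ∀ a b c d : Fin n → ZMod 2,
        (cayley n S).Adj a b → (cayley n S).Adj b c → (cayley n S).Adj c d →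
        (cayley n S).Adj d a → a ≠ c → b ≠ d →
        f s(a, b) + f s(b, c) + f s(c, d) + f s(d, a) = 1) := by
  constructor
  · rintro ⟨M, hsym, hpm, hzero, horth⟩
    refine ⟨Sym2.lift ⟨fun u v => if M u v = 1 then 0 else 1, ?_⟩, ?_⟩
    · intro u v
      show (if M u v = 1 then (0 : ZMod 2) else 1) = (if M v u = 1 then 0 else 1)
      rw [hsym.apply v u]
    · intro a b c d hab hbc hcd hda hac hbd
      set f : Sym2 (Fin n → ZMod 2) → ZMod 2 :=
        Sym2.lift ⟨fun u v => if M u v = 1 then 0 else 1,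
          fun u v => by
            show (if M u v = 1 then (0 : ZMod 2) else 1) = (if M v u = 1 then 0 else 1)
            rw [hsym.apply v u]⟩ with hfdef
      have hMchi : ∀ u v, (cayley n S).Adj u v → M u v = chi (f s(u, v)) := by
        intro u v huv
        rcases hpm u v huv with h | h
        · have h2 : f s(u, v) = 0 := by simp [hfdef, Sym2.lift_mk, h]
          rw [h2, h]; simp [chi]
        · have h1 : M u v ≠ 1 := by rw [h]; norm_num
          have h2 : f s(u, v) = 1 := by simp [hfdef, Sym2.lift_mk, h1]
          rw [h2, h]; simp [chi]
      have hcb : (cayley n S).Adj c b := hbc.symm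
      have had : (cayley n S).Adj a d := hda.symm
      have hsub : ∀ w ∈ Finset.univ, w ∉ ({b, d} : Finset (Fin n → ZMod 2)) →
          M a w * M c w = 0 := by
        intro w _ hw
        simp only [Finset.mem_insert, Finset.mem_singleton, not_or] at hw
        by_cases hu : (cayley n S).Adj a w
        · by_cases hv : (cayley n S).Adj c w
          · exfalso
            have hwbd := sidon_common n S hSidon hac hu hv hab hcb
            have hdbd := sidon_common n S hSidon hac had hcd hab hcb
            rcases hdbd with hd | hd
            · exact hbd hd.symm
            · rcases hwbd with h | h
              · exact hw.1 h
              · exact hw.2 (h.trans hd.symm)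
          · rw [hzero c w hv, mul_zero]
        · rw [hzero a w hu, zero_mul]
      have hsum : M a b * M c b + M a d * M c d = 0 := by
        have h := horth a c hac
        rw [← Finset.sum_subset (Finset.subset_univ _) hsub,
          Finset.sum_pair hbd] at h
        exact h
      rw [hMchi a b hab, hMchi c b hcb, hMchi a d had, hMchi c d hcd,
        show s(c, b) = s(b, c) from Sym2.eq_swap,
        show s(a, d) = s(d, a) from Sym2.eq_swap, ← chi_add, ← chi_add] at hsum
      have := chi_sum_zero_iff hsum
      linear_combination this
  · rintro ⟨f, hf⟩
    set M : Matrix (Fin n → ZMod 2) (Fin n → ZMod 2) ℝ :=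
      fun u v => if (cayley n S).Adj u v then chi (f s(u, v)) else 0 with hM
    have hswap : ∀ u v, M v u = M u v := by
      intro u v
      simp only [hM]
      rw [show s(v, u) = s(u, v) from Sym2.eq_swap, SimpleGraph.adj_comm]
    refine ⟨M, ?_, ?_, ?_, ?_⟩
    · exact Matrix.IsSymm.ext hswap
    · intro u v h
      simp only [hM, if_pos h]
      exact chi_one_or _
    · intro u v h
      simp only [hM, if_neg h]
    · intro u v huv
      have hx := xx n
      by_cases hcn : ∃ w₁, (cayley n S).Adj u w₁ ∧ (cayley n S).Adj v w₁
      · obtain ⟨w₁, h1, h2⟩ := hcn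
        set w₂ := u + (v + w₁) with hw₂
        have e1 : u + w₂ = v + w₁ := by rw [hw₂, ← add_assoc, hx, zero_add]
        have e2 : v + w₂ = u + w₁ := by
          rw [hw₂, add_left_comm v u, ← add_assoc v v w₁, hx, zero_add]
        have hadj_uw₂ : (cayley n S).Adj u w₂ := by
          refine ⟨?_, by rw [e1]; exact h2.2⟩
          intro h
          have h' : v + w₁ = 0 := by rw [← e1, ← h, hx]
          have h'' := shift' hx h'
          rw [add_zero] at h''
          exact h2.1 h''.symm
        have hadj_vw₂ : (cayley n S).Adj v w₂ := by
          refine ⟨?_, by rw [e2]; exact h1.2⟩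
          intro h
          have h' : u + w₁ = 0 := by rw [← e2, ← h, hx]
          have h'' := shift' hx h'
          rw [add_zero] at h''
          exact h1.1 h''.symm
        have hne12 : w₁ ≠ w₂ := by
          intro h
          rw [hw₂] at h
          have h' := shift' hx h.symm
          have h'' : u + w₁ = v + w₁ := by rw [← h']
          exact huv (add_right_cancel h'')
        have hcyc := hf u w₁ v w₂ h1 h2.symm hadj_vw₂ hadj_uw₂.symm huv hne12
        have hout : ∀ w ∈ Finset.univ, w ∉ ({w₁, w₂} : Finset (Fin n → ZMod 2)) →
            M u w * M v w = 0 := by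
          intro w _ hw
          simp only [Finset.mem_insert, Finset.mem_singleton, not_or] at hw
          by_cases hu : (cayley n S).Adj u w
          · by_cases hv : (cayley n S).Adj v w
            · exfalso
              rcases sidon_common n S hSidon huv hu hv h1 h2 with h | h
              · exact hw.1 h
              · exact hw.2 h
            · simp only [hM, if_neg hv, mul_zero]
          · simp only [hM, if_neg hu, zero_mul]
        rw [← Finset.sum_subset (Finset.subset_univ _) hout, Finset.sum_pair hne12]
        simp only [hM, if_pos h1, if_pos h2, if_pos hadj_uw₂, if_pos hadj_vw₂]
        rw [← chi_add, ← chi_add]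
        apply chi_sum_eq_zero
        rw [show s(v, w₁) = s(w₁, v) from Sym2.eq_swap,
          show s(u, w₂) = s(w₂, u) from Sym2.eq_swap]
        linear_combination hcyc
      · apply Finset.sum_eq_zero
        intro w _
        by_cases hu : (cayley n S).Adj u w
        · have hv : ¬ (cayley n S).Adj v w := fun hv => hcn ⟨w, hu, hv⟩
          simp only [hM, if_neg hv, mul_zero]
        · simp only [hM, if_neg hu, zero_mul]
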